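/- For every j ≥ 0 one has (D_{j+1} − D_j) + (d_{j+1} − d_j) = p − 2, i.e., S_j + s_j = p−2 where S_j = D_{j+1} − D_j and s_j = d_{j+1} − d_j. -/

import Mathlib

open MeasureTheory
open scoped NNReal ENNReal

namespace Chacon

/-- The space of digit sequences with digits in `{0, …, p-1}`. -/
def Gamma (p : ℕ) : Set (ℕ → ℕ) := {x | ∀ i, x i < p}

/-- `Γ*`: sequences with digits `< p` having infinitely many coordinates `≠ p - 1`. -/
def GammaStar (p : ℕ) : Set (ℕ → ℕ) :=
  {x | (∀ i, x i < p) ∧ {i | x i ≠ p - 1}.Infinite}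

/-- The least index `i` with `x i ≠ p - 1`. -/
noncomputable def firstNot (p : ℕ) (x : ℕ → ℕ) : ℕ :=
  sInf {i | x i ≠ p - 1}

/-- `φ(x) = x_i` where `i` is the least index with `x_i ≠ p - 1`. -/
noncomputable def phi (p : ℕ) (x : ℕ → ℕ) : ℕ :=
  x (firstNot p x)

/-- The odometer `S` (addition of `1` with carry): the initial run of digits
`p - 1` is replaced by zeros, and the first digit `≠ p - 1` is increased by one. -/
noncomputable def odo (p : ℕ) (x : ℕ → ℕ) : ℕ → ℕ :=
  fun i =>
    if i < firstNot p x then 0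
    else if i = firstNot p x then x i + 1
    else x i

/-- `φ^(m)(x) = ∑_{j=0}^{m-1} φ(S^j x)`. -/
noncomputable def phiSum (p m : ℕ) (x : ℕ → ℕ) : ℕ :=
  ∑ j ∈ Finset.range m, phi p ((odo p)^[j] x)

/-- The base-`p` digit sequence of a real number `u`. -/
noncomputable def digitsOf (p : ℕ) (u : ℝ) : ℕ → ℕ :=
  fun i => (⌊u * (p : ℝ) ^ (i + 1)⌋).toNat % p

/-- `λ`: the product probability measure on digit sequences under which the
coordinates are i.i.d., uniformly distributed in `{0, …, p-1}`; it is realized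
concretely as the distribution of the base-`p` digit sequence of a uniformly
distributed random point of `[0,1)`. -/
noncomputable def lam (p : ℕ) : Measure (ℕ → ℕ) :=
  Measure.map (digitsOf p) (volume.restrict (Set.Ico (0 : ℝ) 1))

/-- `π_m(j) = λ({x : φ^(m)(x) = j})`. -/
noncomputable def pim (p m j : ℕ) : ℝ≥0∞ :=
  lam p {x | phiSum p m x = j}

/-- `P_m^p(t) = ∑_{j ≥ 0} π_m(j) t^j`, a real polynomial
(the sum is over `0 ≤ j ≤ m (p-2)` since `0 ≤ φ^(m) ≤ m (p-2)` a.s.). -/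
noncomputable def P (p m : ℕ) (t : ℝ) : ℝ :=
  ∑ j ∈ Finset.range (m * (p - 2) + 1), (pim p m j).toReal * t ^ j

/-- The `n`-th triangular number `Δ_n = n (n+1) / 2`. -/
def tri (n : ℕ) : ℕ := n * (n + 1) / 2

/-- The degree `D_m` of `P_m^p`: the largest `j` with `π_m(j) ≠ 0`. -/
noncomputable def D (p m : ℕ) : ℕ := sSup {j | pim p m j ≠ 0}

/-- The lower degree `d_m` of `P_m^p`: the least `j` with `π_m(j) ≠ 0`. -/
noncomputable def d (p m : ℕ) : ℕ := sInf {j | pim p m j ≠ 0}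



section aux
variable {p : ℕ}

/-- digit of `n` at the position of the first base-`p` digit `≠ p-1`. -/
def fdig (p : ℕ) (n : ℕ) : ℕ :=
  if h : 2 ≤ p ∧ n % p = p - 1 then fdig p (n / p) else n % p
termination_by n
decreasing_by
  have hn : n ≠ 0 := by rintro rfl; simp at h; omega
  exact Nat.div_lt_self (Nat.pos_of_ne_zero hn) (by omega)

lemma fdig_of_ne {p n : ℕ} (h : n % p ≠ p - 1) : fdig p n = n % p := by
  rw [fdig]; simp [h]

lemma fdig_of_eq {p n : ℕ} (hp : 2 ≤ p) (h : n % p = p - 1) :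
    fdig p n = fdig p (n / p) := by
  rw [fdig]; simp [hp, h]

lemma fdig_le {p : ℕ} (hp : 3 ≤ p) (n : ℕ) : fdig p n ≤ p - 2 := by
  induction n using Nat.strong_induction_on with
  | _ n ih =>
    by_cases h : n % p = p - 1
    · rw [fdig_of_eq (by omega) h]
      have hn : n ≠ 0 := by rintro rfl; simp at h; omega
      exact ih _ (Nat.div_lt_self (Nat.pos_of_ne_zero hn) (by omega))
    · rw [fdig_of_ne h]
      have := Nat.mod_lt n (show 0 < p by omega)
      omega

lemma fdig_digit {p : ℕ} (hp : 3 ≤ p) : ∀ (K n : ℕ),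
    (∀ i, i < K → n / p ^ i % p = p - 1) →
    n / p ^ K % p ≠ p - 1 → fdig p n = n / p ^ K % p := by
  intro K
  induction K with
  | zero =>
    intro n _ hK
    simp only [pow_zero, Nat.div_one] at hK ⊢
    exact fdig_of_ne hK
  | succ K ih =>
    intro n hlow hK
    have h0 : n % p = p - 1 := by simpa using hlow 0 (Nat.succ_pos K)
    rw [fdig_of_eq (by omega) h0]
    have hdd : ∀ i : ℕ, n / p ^ (i + 1) = n / p / p ^ i := by
      intro i
      rw [Nat.div_div_eq_div_mul, ← pow_succ']
    rw [ih (n / p) (fun i hi => by rw [← hdd]; exact hlow (i + 1) (by omega))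
      (by rw [← hdd]; exact hK), hdd]


/-- if all digits below K are p-1 then n = p^K * (n/p^K) + (p^K - 1) -/
lemma prefix_ones (hp : 3 ≤ p) : ∀ (K n : ℕ),
    (∀ i, i < K → n / p ^ i % p = p - 1) →
    n = p ^ K * (n / p ^ K) + (p ^ K - 1) := by
  intro K
  induction K with
  | zero => intro n _; simp
  | succ K ih =>
    intro n hlow
    have h0 : n % p = p - 1 := by simpa using hlow 0 (Nat.succ_pos K)
    have hdd : ∀ i : ℕ, n / p ^ (i + 1) = n / p / p ^ i := by
      intro i; rw [Nat.div_div_eq_div_mul, ← pow_succ']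
    have hq := ih (n / p) (fun i hi => by rw [← hdd]; exact hlow (i + 1) (by omega))
    have hpK : 1 ≤ p ^ K := Nat.one_le_pow _ _ (by omega)
    have hpK1 : 1 ≤ p ^ (K + 1) := Nat.one_le_pow _ _ (by omega)
    have A := Nat.div_add_mod n p
    rw [h0] at A
    zify [show 1 ≤ p by omega] at A
    zify [hpK] at hq
    rw [hdd K]
    zify [hpK1, hpK]
    have hps : (p : ℤ) ^ (K + 1) = p * p ^ K := by ring
    rw [hps]
    linear_combination -A + (p : ℤ) * hq

lemma lower_bound_ones (hp : 3 ≤ p) (K n : ℕ)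
    (h : ∀ i, i < K → n / p ^ i % p = p - 1) : p ^ K - 1 ≤ n := by
  have := prefix_ones hp K n h
  omega



lemma fdig_reflect (hp : 3 ≤ p) : ∀ (N n : ℕ), n + 2 ≤ p ^ N →
    fdig p n + fdig p (p ^ N - 2 - n) = p - 2 := by
  intro N
  induction N with
  | zero => intro n h; simp at h
  | succ N ih =>
    intro n hn2
    have hP : 1 ≤ p ^ N := Nat.one_le_pow _ _ (by omega)
    have hps : p ^ (N + 1) = p * p ^ N := pow_succ' p N
    have hA := Nat.div_add_mod n p
    rw [hps] at hn2
    by_cases h : n % p = p - 1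
    · set q := n / p with hq
      have hq2 : q + 2 ≤ p ^ N := by
        by_contra hcon
        push_neg at hcon
        have h2 : p * p ^ N ≤ p * (q + 1) := Nat.mul_le_mul_left p (by omega)
        have h3 : p * (q + 1) = p * q + p := by ring
        rw [h3] at h2
        set a := p * p ^ N
        set b := p * q
        omega
      have hmval : p * p ^ N - 2 - n = p * (p ^ N - 2 - q) + (p - 1) := by
        obtain ⟨R, hR⟩ : ∃ R, p ^ N = R + 2 + q := ⟨p ^ N - 2 - q, by omega⟩
        rw [hR]
        have hR2 : R + 2 + q - 2 - q = R := by omega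
        rw [hR2]
        have h5 : p * (R + 2 + q) = p * R + 2 * p + p * q := by ring
        rw [h5]
        set a := p * R
        set b := p * q
        omega
      rw [hps, hmval]
      have hmmod : (p * (p ^ N - 2 - q) + (p - 1)) % p = p - 1 := by
        rw [Nat.mul_add_mod]
        exact Nat.mod_eq_of_lt (by omega)
      have hmdiv : (p * (p ^ N - 2 - q) + (p - 1)) / p = p ^ N - 2 - q := by
        rw [Nat.mul_add_div (by omega), Nat.div_eq_of_lt (by omega), add_zero]
      rw [fdig_of_eq (by omega) h, fdig_of_eq (by omega) hmmod, hmdiv]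
      exact ih q hq2
    · set s := n % p with hs
      have hlt : s < p := Nat.mod_lt _ (by omega)
      set q := n / p with hq
      have hq1 : q + 1 ≤ p ^ N := by
        by_contra hcon
        push_neg at hcon
        have h2 : p * p ^ N ≤ p * q := Nat.mul_le_mul_left p (by omega)
        set a := p * p ^ N
        set b := p * q
        omega
      have hmval : p * p ^ N - 2 - n = p * (p ^ N - 1 - q) + (p - 2 - s) := by
        obtain ⟨R, hR⟩ : ∃ R, p ^ N = R + 1 + q := ⟨p ^ N - 1 - q, by omega⟩
        rw [hR]
        have hR2 : R + 1 + q - 1 - q = R := by omega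
        rw [hR2]
        have h5 : p * (R + 1 + q) = p * R + p + p * q := by ring
        rw [h5]
        set a := p * R
        set b := p * q
        omega
      rw [hps, hmval]
      have hmmod : (p * (p ^ N - 1 - q) + (p - 2 - s)) % p = p - 2 - s := by
        rw [Nat.mul_add_mod]
        exact Nat.mod_eq_of_lt (by omega)
      rw [fdig_of_ne h, fdig_of_ne (by rw [hmmod]; omega), hmmod]
      omega



/-- `F p m n = ∑_{j<m} fdig p (n+j)`. -/
def Fm (p m n : ℕ) : ℕ := ∑ j ∈ Finset.range m, fdig p (n + j)

lemma Fm_le (hp : 3 ≤ p) (m n : ℕ) : Fm p m n ≤ m * (p - 2) :=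
  calc Fm p m n ≤ ∑ _j ∈ Finset.range m, (p - 2) :=
        Finset.sum_le_sum fun i _ => fdig_le hp _
    _ = m * (p - 2) := by
        rw [Finset.sum_const, Finset.card_range, smul_eq_mul]

lemma Fm_succ (p m n : ℕ) : Fm p (m + 1) n = Fm p m n + fdig p (n + m) :=
  Finset.sum_range_succ _ _

lemma Fm_reflect (hp : 3 ≤ p) (m n N : ℕ) (h : n + m + 1 ≤ p ^ N) :
    Fm p m n + Fm p m (p ^ N - n - m - 1) = m * (p - 2) := by
  unfold Fm
  have hrefl := Finset.sum_range_reflect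
    (fun j => fdig p (p ^ N - n - m - 1 + j)) m
  rw [← hrefl, ← Finset.sum_add_distrib]
  have hcong : ∀ j ∈ Finset.range m,
      fdig p (n + j) + fdig p (p ^ N - n - m - 1 + (m - 1 - j)) = p - 2 := by
    intro j hj
    have hj' : j < m := Finset.mem_range.mp hj
    have hPa : p ^ N = p ^ N := rfl
    have e : p ^ N - n - m - 1 + (m - 1 - j) = p ^ N - 2 - (n + j) := by
      set P := p ^ N
      omega
    rw [e]
    exact fdig_reflect hp N (n + j) (by set P := p ^ N; omega)
  rw [Finset.sum_congr rfl hcong, Finset.sum_const, Finset.card_range, smul_eq_mul]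

lemma sum_digits_split (p : ℕ) (e : ℕ → ℕ) (K : ℕ) :
    ∑ i ∈ Finset.range (K + 1), e i * p ^ i
      = e 0 + p * ∑ i ∈ Finset.range K, e (i + 1) * p ^ i := by
  rw [Finset.sum_range_succ', pow_zero, mul_one, add_comm]
  congr 1
  rw [Finset.mul_sum]
  exact Finset.sum_congr rfl fun i _ => by ring

lemma digit_extract (hp : 1 ≤ p) : ∀ (j N : ℕ) (e : ℕ → ℕ),
    (∀ i, i < N → e i < p) → j < N →
    (∑ i ∈ Finset.range N, e i * p ^ i) / p ^ j % p = e j := by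
  intro j
  induction j with
  | zero =>
    intro N e he hj
    obtain ⟨K, rfl⟩ : ∃ K, N = K + 1 := ⟨N - 1, by omega⟩
    rw [sum_digits_split, pow_zero, Nat.div_one, Nat.add_mul_mod_self_left]
    exact Nat.mod_eq_of_lt (he 0 (by omega))
  | succ j ih =>
    intro N e he hj
    obtain ⟨K, rfl⟩ : ∃ K, N = K + 1 := ⟨N - 1, by omega⟩
    rw [sum_digits_split]
    have hdiv : (e 0 + p * ∑ i ∈ Finset.range K, e (i + 1) * p ^ i) / p ^ (j + 1)
        = (∑ i ∈ Finset.range K, e (i + 1) * p ^ i) / p ^ j := by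
      rw [pow_succ', ← Nat.div_div_eq_div_mul]
      congr 1
      rw [Nat.add_mul_div_left _ _ (show 0 < p by omega),
        Nat.div_eq_of_lt (he 0 (by omega)), zero_add]
    rw [hdiv]
    exact ih K (fun i => e (i + 1)) (fun i hi => he (i + 1) (by omega)) (by omega)

lemma sum_digits_lt (hp : 1 ≤ p) (N : ℕ) (e : ℕ → ℕ)
    (he : ∀ i, i < N → e i < p) : ∑ i ∈ Finset.range N, e i * p ^ i < p ^ N := by
  induction N with
  | zero => simp
  | succ N ih =>
    rw [Finset.sum_range_succ]
    have h1 : ∑ i ∈ Finset.range N, e i * p ^ i < p ^ N :=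
      ih fun i hi => he i (by omega)
    have h2 : e N * p ^ N ≤ (p - 1) * p ^ N :=
      Nat.mul_le_mul_right _ (by have := he N (by omega); omega)
    calc (∑ i ∈ Finset.range N, e i * p ^ i) + e N * p ^ N
        < p ^ N + (p - 1) * p ^ N := add_lt_add_of_lt_of_le h1 h2
      _ = (p - 1 + 1) * p ^ N := by ring
      _ = p ^ (N + 1) := by rw [show p - 1 + 1 = p by omega, ← pow_succ']

lemma exists_pow (hp : 3 ≤ p) (a : ℕ) : ∃ N, a < p ^ N :=
  ⟨a, Nat.lt_pow_self (by omega : 1 < p)⟩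

lemma range_reflect (hp : 3 ≤ p) (m : ℕ) {v : ℕ} (hv : v ∈ Set.range (Fm p m)) :
    m * (p - 2) - v ∈ Set.range (Fm p m) ∧ v ≤ m * (p - 2) := by
  obtain ⟨n, rfl⟩ := hv
  obtain ⟨N, hN⟩ := exists_pow hp (n + m)
  have hrefl := Fm_reflect hp m n N (by omega)
  exact ⟨⟨p ^ N - n - m - 1, by omega⟩, by omega⟩

lemma sSup_add_sInf (hp : 3 ≤ p) (m : ℕ) :
    sSup (Set.range (Fm p m)) + sInf (Set.range (Fm p m)) = m * (p - 2) := by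
  have hne : (Set.range (Fm p m)).Nonempty := ⟨Fm p m 0, 0, rfl⟩
  have hbdd : BddAbove (Set.range (Fm p m)) :=
    ⟨m * (p - 2), fun v hv => (range_reflect hp m hv).2⟩
  have hsup := Nat.sSup_mem hne hbdd
  have hinf := Nat.sInf_mem hne
  have h1 := range_reflect hp m hsup
  have h2 := range_reflect hp m hinf
  have h3 := Nat.sInf_le h1.1
  have h4 := le_csSup hbdd h2.1
  have h5 := h1.2
  have h6 := h2.2
  omega

lemma sSup_mono (hp : 3 ≤ p) (m : ℕ) :
    sSup (Set.range (Fm p m)) ≤ sSup (Set.range (Fm p (m + 1))) := by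
  have hne : (Set.range (Fm p m)).Nonempty := ⟨Fm p m 0, 0, rfl⟩
  have hbdd : BddAbove (Set.range (Fm p m)) :=
    ⟨m * (p - 2), fun v hv => (range_reflect hp m hv).2⟩
  have hbdd' : BddAbove (Set.range (Fm p (m + 1))) :=
    ⟨(m + 1) * (p - 2), fun v hv => (range_reflect hp (m + 1) hv).2⟩
  obtain ⟨n, hn⟩ := Nat.sSup_mem hne hbdd
  calc sSup (Set.range (Fm p m)) = Fm p m n := hn.symm
    _ ≤ Fm p (m + 1) n := by rw [Fm_succ]; omega
    _ ≤ sSup (Set.range (Fm p (m + 1))) := le_csSup hbdd' ⟨n, rfl⟩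

lemma sInf_mono (p : ℕ) (m : ℕ) :
    sInf (Set.range (Fm p m)) ≤ sInf (Set.range (Fm p (m + 1))) := by
  have hne : (Set.range (Fm p (m + 1))).Nonempty := ⟨Fm p (m + 1) 0, 0, rfl⟩
  obtain ⟨n, hn⟩ := Nat.sInf_mem hne
  calc sInf (Set.range (Fm p m)) ≤ Fm p m n := Nat.sInf_le ⟨n, rfl⟩
    _ ≤ Fm p (m + 1) n := by rw [Fm_succ]; omega
    _ = sInf (Set.range (Fm p (m + 1))) := hn



lemma odo_step (hp : 3 ≤ p) (N n : ℕ) (x : ℕ → ℕ)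
    (hx : ∀ i, i < N → x i = n / p ^ i % p) (hn : n + 1 < p ^ N) :
    phi p x = fdig p n ∧ (∀ i, i < N → odo p x i = (n + 1) / p ^ i % p) := by
  -- there is a digit ≠ p - 1 below N
  have hwit : ∃ i, i < N ∧ x i ≠ p - 1 := by
    by_contra hcon
    push_neg at hcon
    have hall : ∀ i, i < N → n / p ^ i % p = p - 1 := by
      intro i hi; rw [← hx i hi]; exact hcon i hi
    have := prefix_ones hp N n hall
    have h1 : 1 ≤ p ^ N := Nat.one_le_pow _ _ (by omega)
    set a := p ^ N * (n / p ^ N)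
    omega
  obtain ⟨i₀, hi₀N, hi₀⟩ := hwit
  set K := firstNot p x with hKdef
  have hKmem : x K ≠ p - 1 := Nat.sInf_mem (⟨i₀, hi₀⟩ : Set.Nonempty {i | x i ≠ p - 1})
  have hKle : K ≤ i₀ := Nat.sInf_le hi₀
  have hKlt : K < N := lt_of_le_of_lt hKle hi₀N
  have hlow : ∀ i, i < K → x i = p - 1 := by
    intro i hi
    by_contra hne
    have h2 : K ≤ i := Nat.sInf_le hne
    omega
  have hlowd : ∀ i, i < K → n / p ^ i % p = p - 1 := fun i hi => by
    rw [← hx i (by omega)]; exact hlow i hi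
  have hKd : n / p ^ K % p ≠ p - 1 := by rw [← hx K hKlt]; exact hKmem
  have hphi : phi p x = fdig p n := by
    rw [phi, ← hKdef, hx K hKlt, fdig_digit hp K n hlowd hKd]
  refine ⟨hphi, ?_⟩
  -- structure of n
  set q := n / p ^ K with hqdef
  have hq := prefix_ones hp K n hlowd
  have hpK : 1 ≤ p ^ K := Nat.one_le_pow _ _ (by omega)
  have hsucc : n + 1 = p ^ K * (q + 1) := by
    have e : p ^ K * (q + 1) = p ^ K * q + p ^ K := by ring
    rw [e]
    set a := p ^ K * q
    set b := p ^ K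
    omega
  have hqmod : q % p = x K := by rw [hx K hKlt]
  have hqle : q % p ≤ p - 2 := by
    have h1 : q % p < p := Nat.mod_lt _ (by omega)
    have h2 : q % p ≠ p - 1 := by rw [hqmod]; exact hKmem
    omega
  intro i hi
  rcases lt_trichotomy i K with hc | hc | hc
  · -- i < K : odo gives 0
    have hodo : odo p x i = 0 := by rw [odo]; simp [← hKdef, hc]
    have hdig : (n + 1) / p ^ i = p ^ (K - i) * (q + 1) := by
      rw [hsucc, show p ^ K = p ^ i * p ^ (K - i) by
        rw [← pow_add]; congr 1; omega, mul_assoc]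
      exact Nat.mul_div_cancel_left _ (Nat.one_le_pow _ _ (by omega))
    obtain ⟨t, ht⟩ : ∃ t, K - i = t + 1 := ⟨K - i - 1, by omega⟩
    have hre : p ^ (K - i) * (q + 1) = p * (p ^ t * (q + 1)) := by
      rw [ht, pow_succ']
      ring
    rw [hodo, hdig, hre, Nat.mul_mod_right]
  · -- i = K
    have hodo : odo p x i = x i + 1 := by
      simp only [odo, ← hKdef]
      rw [if_neg (by omega), if_pos hc]
    have hdig : (n + 1) / p ^ K = q + 1 := by
      rw [hsucc]
      exact Nat.mul_div_cancel_left _ (Nat.one_le_pow _ _ (by omega))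
    have hmod : (q + 1) % p = q % p + 1 := by
      conv_lhs => rw [← Nat.div_add_mod q p]
      rw [add_assoc, Nat.mul_add_mod]
      exact Nat.mod_eq_of_lt (by omega)
    rw [hodo, hc, hdig, hmod, hqmod]
  · -- i > K
    have hodo : odo p x i = x i := by
      simp only [odo, ← hKdef]
      rw [if_neg (by omega), if_neg (by omega)]
    have hii : p ^ i = p ^ K * p ^ (i - K) := by rw [← pow_add]; congr 1; omega
    have hdiv1 : (q + 1) / p = q / p := by
      conv_lhs => rw [← Nat.div_add_mod q p]
      rw [add_assoc, Nat.mul_add_div (by omega : 0 < p),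
        Nat.div_eq_of_lt (by omega : q % p + 1 < p), add_zero]
    have hstep : (q + 1) / p ^ (i - K) = q / p ^ (i - K) := by
      obtain ⟨t, ht⟩ : ∃ t, i - K = t + 1 := ⟨i - K - 1, by omega⟩
      rw [ht, pow_succ', ← Nat.div_div_eq_div_mul, ← Nat.div_div_eq_div_mul, hdiv1]
    have hn1 : (n + 1) / p ^ i = (q + 1) / p ^ (i - K) := by
      rw [hii, ← Nat.div_div_eq_div_mul, hsucc,
        Nat.mul_div_cancel_left _ (by omega : 0 < p ^ K)]
    have hn0 : n / p ^ i = q / p ^ (i - K) := by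
      rw [hii, ← Nat.div_div_eq_div_mul, hqdef]
    rw [hodo, hx i hi, hn1, hstep, ← hn0]

lemma phiSum_prefix (hp : 3 ≤ p) : ∀ (m n : ℕ) (x : ℕ → ℕ) (N : ℕ),
    (∀ i, i < N → x i = n / p ^ i % p) → n + m < p ^ N →
    phiSum p m x = Fm p m n := by
  intro m
  induction m with
  | zero => intro n x N _ _; simp [phiSum, Fm]
  | succ m ih =>
    intro n x N hx hnm
    have hstep := odo_step hp N n x hx (by omega)
    have hrec := ih (n + 1) (odo p x) N hstep.2 (by omega)
    rw [phiSum, Finset.sum_range_succ']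
    simp only [Function.iterate_succ_apply, Function.iterate_zero_apply]
    rw [show (∑ j ∈ Finset.range m, phi p ((odo p)^[j] (odo p x))) = Fm p m (n + 1)
      from hrec, hstep.1]
    have hFm : Fm p (m + 1) n = fdig p n + ∑ j ∈ Finset.range m, fdig p (n + 1 + j) := by
      unfold Fm
      rw [Finset.sum_range_succ', add_zero, add_comm]
      congr 1
      exact Finset.sum_congr rfl fun j _ => by
        rw [show n + (j + 1) = n + 1 + j by omega]
    rw [hFm]
    exact Nat.add_comm _ _


lemma measurable_digitsOf (p : ℕ) : Measurable (digitsOf p) := by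
  apply measurable_pi_lambda
  intro i
  have h1 : Measurable fun u : ℝ => ⌊u * (p : ℝ) ^ (i + 1)⌋ :=
    (measurable_id.mul_const _).floor
  exact (measurable_from_top (f := fun z : ℤ => z.toNat % p)).comp h1

lemma digitsOf_interval (hp : 3 ≤ p) (N c : ℕ) (hc : c < p ^ N) (u : ℝ)
    (h1 : (c : ℝ) / (p : ℝ) ^ N ≤ u) (h2 : u < ((c : ℝ) + 1) / (p : ℝ) ^ N)
    (i : ℕ) (hi : i < N) :
    digitsOf p u i = c / p ^ (N - 1 - i) % p := by
  set M := N - 1 - i with hM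
  set q := c / p ^ M with hq
  have hpM : (0 : ℝ) < (p : ℝ) ^ M := by positivity
  have hNsplit : (p : ℝ) ^ N = (p : ℝ) ^ (i + 1) * (p : ℝ) ^ M := by
    rw [← pow_add]
    congr 1
    omega
  have hql : (q : ℝ) * (p : ℝ) ^ M ≤ (c : ℝ) := by
    have h := Nat.div_mul_le_self c (p ^ M)
    calc (q : ℝ) * (p : ℝ) ^ M = ((q * p ^ M : ℕ) : ℝ) := by push_cast; ring
      _ ≤ (c : ℝ) := by exact_mod_cast h
  have hqu : (c : ℝ) + 1 ≤ ((q : ℝ) + 1) * (p : ℝ) ^ M := by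
    have hdm := Nat.div_add_mod c (p ^ M)
    have hmlt : c % p ^ M < p ^ M := Nat.mod_lt _ (Nat.pow_pos (by omega : 0 < p))
    have hnat : c + 1 ≤ (q + 1) * p ^ M := by
      have he : (q + 1) * p ^ M = p ^ M * q + p ^ M := by ring
      rw [he]
      set a := p ^ M * q
      set b := p ^ M
      set e := c % p ^ M
      omega
    calc (c : ℝ) + 1 = (((c + 1 : ℕ)) : ℝ) := by push_cast; ring
      _ ≤ (((q + 1) * p ^ M : ℕ) : ℝ) := by exact_mod_cast hnat
      _ = ((q : ℝ) + 1) * (p : ℝ) ^ M := by push_cast; ring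
  have hcle : (c : ℝ) ≤ u * (p : ℝ) ^ N := by
    rw [div_le_iff₀ (by positivity)] at h1
    linarith
  have hclt : u * (p : ℝ) ^ N < (c : ℝ) + 1 := by
    rw [lt_div_iff₀ (by positivity)] at h2
    linarith
  have hfl : ⌊u * (p : ℝ) ^ (i + 1)⌋ = (q : ℤ) := by
    rw [Int.floor_eq_iff]
    constructor
    · have h3 : (q : ℝ) * (p : ℝ) ^ M ≤ u * (p : ℝ) ^ (i + 1) * (p : ℝ) ^ M := by
        rw [hNsplit] at hcle
        calc (q : ℝ) * (p : ℝ) ^ M ≤ (c : ℝ) := hql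
          _ ≤ u * ((p : ℝ) ^ (i + 1) * (p : ℝ) ^ M) := hcle
          _ = u * (p : ℝ) ^ (i + 1) * (p : ℝ) ^ M := by ring
      have := le_of_mul_le_mul_right h3 hpM
      push_cast
      linarith
    · have h3 : u * (p : ℝ) ^ (i + 1) * (p : ℝ) ^ M < ((q : ℝ) + 1) * (p : ℝ) ^ M := by
        rw [hNsplit] at hclt
        calc u * (p : ℝ) ^ (i + 1) * (p : ℝ) ^ M
            = u * ((p : ℝ) ^ (i + 1) * (p : ℝ) ^ M) := by ring
          _ < (c : ℝ) + 1 := hclt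
          _ ≤ ((q : ℝ) + 1) * (p : ℝ) ^ M := hqu
      have := lt_of_mul_lt_mul_right h3 (le_of_lt hpM)
      push_cast
      linarith
  rw [digitsOf, hfl]
  simp

lemma no_tail (hp : 3 ≤ p) (u : ℝ) (h0 : 0 ≤ u) (N : ℕ) :
    ∃ i, N ≤ i ∧ digitsOf p u i ≠ p - 1 := by
  by_contra hcon
  push_neg at hcon
  set r : ℕ → ℝ := fun i => Int.fract (u * (p : ℝ) ^ (i + 1)) with hr
  have hppos : (0 : ℝ) < (p : ℝ) := by
    have : (0 : ℕ) < p := by omega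
    exact_mod_cast this
  have step : ∀ i, N ≤ i → 1 - r (i + 1) = (p : ℝ) * (1 - r i) := by
    intro i hi
    have hd := hcon (i + 1) (by omega)
    set v := u * (p : ℝ) ^ (i + 1) with hv
    have hv2 : u * (p : ℝ) ^ (i + 1 + 1) = v * p := by rw [hv]; ring
    have hsplit : v * p = Int.fract v * p + ((⌊v⌋ * p : ℤ) : ℝ) := by
      rw [Int.fract]
      push_cast
      ring
    have hfloor : ⌊v * p⌋ = ⌊Int.fract v * p⌋ + ⌊v⌋ * p := by
      rw [hsplit, Int.floor_add_intCast]
    set d : ℤ := ⌊Int.fract v * p⌋ with hd'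
    have hd0 : 0 ≤ d := Int.floor_nonneg.mpr (mul_nonneg (Int.fract_nonneg v) hppos.le)
    have hdp : d < (p : ℤ) := by
      have h2 : Int.fract v * p < 1 * p :=
        mul_lt_mul_of_pos_right (Int.fract_lt_one v) hppos
      have h3 : Int.fract v * p < ((p : ℤ) : ℝ) := by push_cast; linarith
      exact Int.floor_lt.mpr h3
    have hvnn : (0 : ℤ) ≤ ⌊v⌋ := Int.floor_nonneg.mpr (mul_nonneg h0 (by positivity))
    -- the (i+1)-st digit equals d
    have hdig : (digitsOf p u (i + 1) : ℤ) = d := by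
      rw [digitsOf]
      rw [hv2, hfloor]
      have hnn : (0 : ℤ) ≤ d + ⌊v⌋ * p := by positivity
      push_cast [Int.toNat_of_nonneg hnn]
      rw [Int.add_mul_emod_self_right]
      exact Int.emod_eq_of_lt hd0 hdp
    have hdval : d = (p : ℤ) - 1 := by
      rw [hd] at hdig
      have : ((p - 1 : ℕ) : ℤ) = (p : ℤ) - 1 := by
        have : 1 ≤ p := by omega
        push_cast [this]
        ring
      omega
    -- fract (v * p) = fract v * p - (p - 1)
    have hfr : r (i + 1) = Int.fract v * p - ((p : ℝ) - 1) := by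
      have e1 : r (i + 1) = Int.fract (u * (p : ℝ) ^ (i + 1 + 1)) := rfl
      rw [e1, hv2, Int.fract, hfloor, Int.fract]
      push_cast [hdval]
      ring
    have e2 : r i = Int.fract v := rfl
    rw [hfr, e2]
    ring
  have iter : ∀ k, 1 - r (N + k) = (p : ℝ) ^ k * (1 - r N) := by
    intro k
    induction k with
    | zero => simp
    | succ k ih =>
      rw [show N + (k + 1) = (N + k) + 1 by omega, step (N + k) (by omega), ih,
        pow_succ]
      ring
  have hrN : r N < 1 := Int.fract_lt_one _
  have hpos : 0 < 1 - r N := by linarith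
  obtain ⟨k, hk⟩ := pow_unbounded_of_one_lt (y := (p : ℝ)) (1 / (1 - r N))
    (by exact_mod_cast (by omega : (1 : ℕ) < p))
  have h2 : 1 < (p : ℝ) ^ k * (1 - r N) := by
    rw [div_lt_iff₀ hpos] at hk
    linarith
  have h3 := iter k
  have h4 : 0 ≤ r (N + k) := Int.fract_nonneg _
  linarith


lemma pim_Fm_ne_zero (hp : 3 ≤ p) (m n : ℕ) : pim p m (Fm p m n) ≠ 0 := by
  obtain ⟨N, hN⟩ := exists_pow hp (n + m)
  set e : ℕ → ℕ := fun k => n / p ^ (N - 1 - k) % p with he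
  set c : ℕ := ∑ k ∈ Finset.range N, e k * p ^ k with hc
  have hep : ∀ k, k < N → e k < p := fun k _ => Nat.mod_lt _ (by omega)
  have hclt : c < p ^ N := sum_digits_lt (by omega) N e hep
  have hcd : ∀ i, i < N → c / p ^ (N - 1 - i) % p = n / p ^ i % p := by
    intro i hi
    calc c / p ^ (N - 1 - i) % p = e (N - 1 - i) :=
          digit_extract (by omega) _ N e hep (by omega)
      _ = n / p ^ i % p := by
          rw [he]
          show n / p ^ (N - 1 - (N - 1 - i)) % p = n / p ^ i % p
          have e2 : N - 1 - (N - 1 - i) = i := by omega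
          rw [e2]
  set Cyl : Set (ℕ → ℕ) := {x | ∀ i, i < N → x i = n / p ^ i % p} with hCyl
  have hsub : Cyl ⊆ {x | phiSum p m x = Fm p m n} := fun x hx =>
    phiSum_prefix hp m n x N hx (by omega)
  set a : ℝ := (c : ℝ) / (p : ℝ) ^ N with ha
  set b : ℝ := ((c : ℝ) + 1) / (p : ℝ) ^ N with hb
  have hPpos : (0 : ℝ) < (p : ℝ) ^ N := by positivity
  have hba : b - a = 1 / (p : ℝ) ^ N := by
    rw [ha, hb, div_sub_div_same]
    norm_num
  have hIco : Set.Ico a b ⊆ digitsOf p ⁻¹' Cyl := by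
    intro u hu
    intro i hi
    rw [digitsOf_interval hp N c hclt u hu.1 hu.2 i hi]
    exact hcd i hi
  have hIco01 : Set.Ico a b ⊆ Set.Ico (0 : ℝ) 1 := by
    intro u hu
    have ha0 : 0 ≤ a := by positivity
    have hb1 : b ≤ 1 := by
      rw [hb, div_le_one hPpos]
      have h9 : c + 1 ≤ p ^ N := by omega
      have h10 : ((c + 1 : ℕ) : ℝ) ≤ ((p ^ N : ℕ) : ℝ) := by exact_mod_cast h9
      push_cast at h10
      linarith
    exact ⟨le_trans ha0 hu.1, lt_of_lt_of_le hu.2 hb1⟩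
  have hMeasCyl : MeasurableSet Cyl := by
    have hrw : Cyl = ⋂ i, ⋂ (_ : i < N), (fun x : ℕ → ℕ => x i) ⁻¹' {n / p ^ i % p} := by
      ext x
      simp [hCyl, Set.mem_iInter]
    rw [hrw]
    exact MeasurableSet.iInter fun i => MeasurableSet.iInter fun _ =>
      measurable_pi_apply i (measurableSet_singleton _)
  have hle1 : lam p Cyl ≤ pim p m (Fm p m n) := measure_mono hsub
  have hle2 : volume.restrict (Set.Ico (0 : ℝ) 1) (digitsOf p ⁻¹' Cyl) ≤ lam p Cyl :=
    Measure.le_map_apply (measurable_digitsOf p).aemeasurable Cyl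
  have hle3 : volume (Set.Ico a b) ≤
      volume.restrict (Set.Ico (0 : ℝ) 1) (digitsOf p ⁻¹' Cyl) := by
    rw [Measure.restrict_apply (measurable_digitsOf p hMeasCyl)]
    apply measure_mono
    exact fun u hu => ⟨hIco hu, hIco01 hu⟩
  have hpos : 0 < volume (Set.Ico a b) := by
    rw [Real.volume_Ico]
    apply ENNReal.ofReal_pos.mpr
    rw [hba]
    positivity
  exact (lt_of_lt_of_le hpos (le_trans hle3 (le_trans hle2 hle1))).ne'

lemma pim_eq_zero (hp : 3 ≤ p) (m j : ℕ) (hj : j ∉ Set.range (Fm p m)) :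
    pim p m j = 0 := by
  set bad : Set (ℕ → ℕ) := ⋃ N, ⋂ i, {x : ℕ → ℕ | N ≤ i → x i = p - 1} with hbad
  set notG : Set (ℕ → ℕ) := ⋃ i, {x : ℕ → ℕ | p ≤ x i} with hnotG
  have hmeas : MeasurableSet (bad ∪ notG) := by
    apply MeasurableSet.union
    · refine MeasurableSet.iUnion fun N => MeasurableSet.iInter fun i => ?_
      by_cases h : N ≤ i
      · have hrw : {x : ℕ → ℕ | N ≤ i → x i = p - 1}
            = (fun x : ℕ → ℕ => x i) ⁻¹' {p - 1} := by
          ext x; simp [h]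
        rw [hrw]
        exact measurable_pi_apply i (measurableSet_singleton _)
      · have hrw : {x : ℕ → ℕ | N ≤ i → x i = p - 1} = Set.univ := by
          ext x; simp [h]
        rw [hrw]
        exact MeasurableSet.univ
    · refine MeasurableSet.iUnion fun i => ?_
      have hrw : {x : ℕ → ℕ | p ≤ x i} = (fun x : ℕ → ℕ => x i) ⁻¹' (Set.Ici p) := rfl
      rw [hrw]
      exact measurable_pi_apply i (by trivial)
  have hsub : {x : ℕ → ℕ | phiSum p m x = j} ⊆ bad ∪ notG := by
    intro x hx
    by_contra hxn
    have hxbad : x ∉ bad := fun h => hxn (Or.inl h)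
    have hxnotG : x ∉ notG := fun h => hxn (Or.inr h)
    have hdig : ∀ i, x i < p := by
      intro i
      by_contra h
      exact hxnotG (Set.mem_iUnion.mpr ⟨i, by simpa using (by omega : p ≤ x i)⟩)
    have hnb : ∃ i, m ≤ i ∧ x i ≠ p - 1 := by
      by_contra hcon
      push_neg at hcon
      exact hxbad (Set.mem_iUnion.mpr ⟨m, Set.mem_iInter.mpr fun i hi => hcon i hi⟩)
    obtain ⟨i₀, hi₀m, hi₀⟩ := hnb
    set N := i₀ + 1 with hNdef
    set n := ∑ k ∈ Finset.range N, x k * p ^ k with hn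
    have hxd : ∀ i, i < N → x i = n / p ^ i % p := fun i hi =>
      (digit_extract (by omega) i N x (fun k _ => hdig k) hi).symm
    have hbound : n + m < p ^ N := by
      have h1 : ∑ k ∈ Finset.range i₀, x k * p ^ k < p ^ i₀ :=
        sum_digits_lt (by omega) i₀ x (fun k _ => hdig k)
      have h2 : x i₀ ≤ p - 2 := by have := hdig i₀; omega
      have h3 : x i₀ * p ^ i₀ ≤ (p - 2) * p ^ i₀ := Nat.mul_le_mul_right _ h2
      have h4 : m < p ^ i₀ := lt_of_le_of_lt hi₀m (Nat.lt_pow_self (by omega : 1 < p))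
      have h5 : n = ∑ k ∈ Finset.range i₀, x k * p ^ k + x i₀ * p ^ i₀ :=
        Finset.sum_range_succ _ _
      have h6 : p ^ N = p * p ^ i₀ := pow_succ' p i₀
      have h7 : p ^ i₀ + (p - 2) * p ^ i₀ + p ^ i₀ = p * p ^ i₀ := by
        have e : p ^ i₀ + (p - 2) * p ^ i₀ + p ^ i₀ = (p - 2 + 2) * p ^ i₀ := by ring
        rw [e, show p - 2 + 2 = p by omega]
      set A := ∑ k ∈ Finset.range i₀, x k * p ^ k
      set B := x i₀ * p ^ i₀
      set C := (p - 2) * p ^ i₀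
      set Dd := p ^ i₀
      set E := p * p ^ i₀
      set F := p ^ N
      omega
    have hps := phiSum_prefix hp m n x N hxd hbound
    exact hj ⟨n, by rw [← hps]; exact hx⟩
  have h1 : pim p m j ≤ lam p (bad ∪ notG) := measure_mono hsub
  have h2 : lam p (bad ∪ notG)
      = volume.restrict (Set.Ico (0 : ℝ) 1) (digitsOf p ⁻¹' (bad ∪ notG)) :=
    Measure.map_apply (measurable_digitsOf p) hmeas
  have h3 : digitsOf p ⁻¹' (bad ∪ notG) ∩ Set.Ico (0 : ℝ) 1 = ∅ := by
    ext u
    simp only [Set.mem_inter_iff, Set.mem_empty_iff_false, iff_false, not_and]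
    intro hu1 hu2
    cases hu1 with
    | inl h =>
      obtain ⟨N, hN⟩ := Set.mem_iUnion.mp h
      obtain ⟨i, hiN, hine⟩ := no_tail hp u hu2.1 N
      exact hine (Set.mem_iInter.mp hN i hiN)
    | inr h =>
      obtain ⟨i, hi⟩ := Set.mem_iUnion.mp h
      have hlt : digitsOf p u i < p := Nat.mod_lt _ (by omega)
      have hge : p ≤ digitsOf p u i := hi
      omega
  rw [h2, Measure.restrict_apply (measurable_digitsOf p hmeas), h3,
    measure_empty] at h1
  exact le_antisymm h1 zero_le

lemma range_eq (hp : 3 ≤ p) (m : ℕ) :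
    {j | pim p m j ≠ 0} = Set.range (Fm p m) := by
  ext j
  simp only [Set.mem_setOf_eq]
  constructor
  · intro h
    by_contra hn
    exact h (pim_eq_zero hp m j hn)
  · rintro ⟨n, rfl⟩
    exact pim_Fm_ne_zero hp m n


end aux

/-- `S_j + s_j = p - 2` for every `j ≥ 0`, where
`S_j = D_{j+1} - D_j` and `s_j = d_{j+1} - d_j`. -/
theorem statement_18 (p : ℕ) (hp : 3 ≤ p) (j : ℕ) :
    (D p (j + 1) - D p j) + (d p (j + 1) - d p j) = p - 2 := by
  have hDj : ∀ m, D p m = sSup (Set.range (Fm p m)) := fun m => by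
    rw [D, range_eq hp m]
  have hdj : ∀ m, d p m = sInf (Set.range (Fm p m)) := fun m => by
    rw [d, range_eq hp m]
  have h1 := sSup_add_sInf hp j
  have h2 := sSup_add_sInf hp (j + 1)
  have h3 := sSup_mono hp j
  have h4 := sInf_mono p j
  rw [hDj (j + 1), hDj j, hdj (j + 1), hdj j]
  have h5 : (j + 1) * (p - 2) = j * (p - 2) + (p - 2) := by
    have h6 : p - 2 + 2 = p := by omega
    ring
  set a := j * (p - 2)
  set b := (j + 1) * (p - 2)
  set S1 := sSup (Set.range (Fm p j))
  set S2 := sSup (Set.range (Fm p (j + 1)))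
  set s1 := sInf (Set.range (Fm p j))
  set s2 := sInf (Set.range (Fm p (j + 1)))
  omega

end Chacon
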